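/- Let T ∈ ℝ, let a, b, σ be positive real constants, and let g₁, g₂ : (−∞,T] → ℝ be continuous with 0 ≤ g̲ ≤ g₁(t) ≤ g₂(t) ≤ ḡ for all t ≤ T, where g̲, ḡ are constants, and let 0 ≤ ψ̲ ≤ ψ₁ ≤ ψ₂ ≤ ψ̄ be constants. Let φ₁ and φ₂ be the solutions on (−∞,T] of the Riccati equation φ′(t) = (σ²/2)·φ(t)² + a·φ(t) − (1 + b·gᵢ(t)) with φᵢ(T) = ψᵢ (i = 1,2), and set φ̲(t) := Φ(t,T;ψ̲,g̲) and φ̄(t) := Φ(t,T;ψ̄,ḡ). Then for all t ≤ T: min(ψ̲, (k(g̲)−a)/σ²) ≤ φ̲(t) ≤ φ₁(t) ≤ φ₂(t) ≤ φ̄(t) ≤ max(ψ̄, (k(ḡ)−a)/σ²), where k(x) := √(a² + 2(1+b·x)·σ²). -/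

import Mathlib

/-- k(x) := √(a² + 2(1+b·x)·σ²). -/
noncomputable def kfun (a b σ x : ℝ) : ℝ := Real.sqrt (a ^ 2 + 2 * (1 + b * x) * σ ^ 2)

/-- The explicit solution Φ(t,T;ψ,γ) of the Riccati equation with constant coefficient γ. -/
noncomputable def Phi (a b σ ψ γ T t : ℝ) : ℝ :=
  ((kfun a b σ γ - a) / σ ^ 2 * (ψ + (a + kfun a b σ γ) / σ ^ 2) +
      (a + kfun a b σ γ) / σ ^ 2 * (ψ + (a - kfun a b σ γ) / σ ^ 2) *
        Real.exp (-(kfun a b σ γ) * (T - t))) /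
    ((ψ + (a + kfun a b σ γ) / σ ^ 2) +
      ((kfun a b σ γ - a) / σ ^ 2 - ψ) * Real.exp (-(kfun a b σ γ) * (T - t)))

section Aux

private lemma kfun_sq {a b σ γ : ℝ} (hb : 0 < b) (hγ : 0 ≤ γ) :
    (kfun a b σ γ) ^ 2 = a ^ 2 + 2 * (1 + b * γ) * σ ^ 2 := by
  have h1 : (0:ℝ) < 1 + b * γ := by positivity
  rw [kfun, Real.sq_sqrt (by nlinarith [sq_nonneg a, sq_nonneg σ])]

private lemma kfun_gt {a b σ γ : ℝ} (ha : 0 < a) (hb : 0 < b) (hσ : 0 < σ) (hγ : 0 ≤ γ) :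
    a < kfun a b σ γ := by
  have h1 : (0:ℝ) < 1 + b * γ := by positivity
  have h2 : a ^ 2 < a ^ 2 + 2 * (1 + b * γ) * σ ^ 2 := by nlinarith [pow_pos hσ 2]
  exact Real.lt_sqrt ha.le |>.2 h2

private lemma Phi_denom_pos {a b σ γ ψ T t : ℝ} (ha : 0 < a) (hb : 0 < b) (hσ : 0 < σ)
    (hγ : 0 ≤ γ) (hψ : 0 ≤ ψ) (ht : t ≤ T) :
    0 < (ψ + (a + kfun a b σ γ) / σ ^ 2) +
      ((kfun a b σ γ - a) / σ ^ 2 - ψ) * Real.exp (-(kfun a b σ γ) * (T - t)) := by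
  have hka := kfun_gt ha hb hσ hγ
  set k := kfun a b σ γ with hkdef
  have hk : 0 < k := ha.trans hka
  have hE0 : 0 < Real.exp (-k * (T - t)) := Real.exp_pos _
  have hE1 : Real.exp (-k * (T - t)) ≤ 1 := Real.exp_le_one_iff.2 (by nlinarith)
  have hσ2 : (0:ℝ) < σ ^ 2 := pow_pos hσ 2
  have hA : 0 < ψ + (a + k) / σ ^ 2 := by
    have : 0 < (a + k) / σ ^ 2 := by positivity
    linarith
  have hAB : 0 < (ψ + (a + k) / σ ^ 2) + ((k - a) / σ ^ 2 - ψ) := by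
    have h : (ψ + (a + k) / σ ^ 2) + ((k - a) / σ ^ 2 - ψ) = 2 * k / σ ^ 2 := by ring
    rw [h]; positivity
  nlinarith [mul_pos hE0 hAB, mul_nonneg (sub_nonneg.2 hE1) hA.le]

private lemma Phi_apply_T {a b σ γ ψ : ℝ} (ha : 0 < a) (hb : 0 < b) (hσ : 0 < σ)
    (hγ : 0 ≤ γ) (T : ℝ) : Phi a b σ ψ γ T T = ψ := by
  have hka := kfun_gt ha hb hσ hγ
  have hσ2 : (0:ℝ) < σ ^ 2 := pow_pos hσ 2
  set k := kfun a b σ γ with hkdef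
  have hk : 0 < k := ha.trans hka
  have hD : (ψ + (a + k) / σ ^ 2) + ((k - a) / σ ^ 2 - ψ) ≠ 0 := by
    have h : (ψ + (a + k) / σ ^ 2) + ((k - a) / σ ^ 2 - ψ) = 2 * k / σ ^ 2 := by ring
    rw [h]; positivity
  simp only [Phi, sub_self, mul_zero, neg_mul, neg_zero, Real.exp_zero, mul_one, ← hkdef]
  rw [div_eq_iff hD]
  field_simp
  ring

private lemma Phi_bounds {a b σ γ ψ T t : ℝ} (ha : 0 < a) (hb : 0 < b) (hσ : 0 < σ)
    (hγ : 0 ≤ γ) (hψ : 0 ≤ ψ) (ht : t ≤ T) :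
    min ψ ((kfun a b σ γ - a) / σ ^ 2) ≤ Phi a b σ ψ γ T t ∧
      Phi a b σ ψ γ T t ≤ max ψ ((kfun a b σ γ - a) / σ ^ 2) := by
  have hka := kfun_gt ha hb hσ hγ
  have hD := Phi_denom_pos (ψ := ψ) ha hb hσ hγ hψ ht
  have hσ2 : (0:ℝ) < σ ^ 2 := pow_pos hσ 2
  set k := kfun a b σ γ with hkdef
  have hk : 0 < k := ha.trans hka
  have hE0 : 0 < Real.exp (-k * (T - t)) := Real.exp_pos _
  have hE1 : Real.exp (-k * (T - t)) ≤ 1 := Real.exp_le_one_iff.2 (by nlinarith)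
  set E := Real.exp (-k * (T - t)) with hEdef
  have hA : 0 < ψ + (a + k) / σ ^ 2 := by
    have : 0 < (a + k) / σ ^ 2 := by positivity
    linarith
  have hβα : (0:ℝ) < (k - a) / σ ^ 2 + (a + k) / σ ^ 2 := by
    have h : (k - a) / σ ^ 2 + (a + k) / σ ^ 2 = 2 * k / σ ^ 2 := by ring
    rw [h]; positivity
  rw [Phi]
  simp only [← hkdef, ← hEdef]
  constructor
  · rw [le_div_iff₀ hD]
    rcases le_total ψ ((k - a) / σ ^ 2) with h | h
    · rw [min_eq_left h]
      have key : ((k - a) / σ ^ 2 * (ψ + (a + k) / σ ^ 2) +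
          (a + k) / σ ^ 2 * (ψ + (a - k) / σ ^ 2) * E) -
          ψ * ((ψ + (a + k) / σ ^ 2) + ((k - a) / σ ^ 2 - ψ) * E)
          = ((k - a) / σ ^ 2 - ψ) * (ψ + (a + k) / σ ^ 2) * (1 - E) := by ring
      nlinarith [mul_nonneg (mul_nonneg (sub_nonneg.2 h) hA.le) (sub_nonneg.2 hE1)]
    · rw [min_eq_right h]
      have key : ((k - a) / σ ^ 2 * (ψ + (a + k) / σ ^ 2) +
          (a + k) / σ ^ 2 * (ψ + (a - k) / σ ^ 2) * E) -
          (k - a) / σ ^ 2 * ((ψ + (a + k) / σ ^ 2) + ((k - a) / σ ^ 2 - ψ) * E)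
          = ((k - a) / σ ^ 2 + (a + k) / σ ^ 2) * (ψ - (k - a) / σ ^ 2) * E := by ring
      nlinarith [mul_nonneg (mul_nonneg hβα.le (sub_nonneg.2 h)) hE0.le]
  · rw [div_le_iff₀ hD]
    rcases le_total ψ ((k - a) / σ ^ 2) with h | h
    · rw [max_eq_right h]
      have key : (k - a) / σ ^ 2 * ((ψ + (a + k) / σ ^ 2) + ((k - a) / σ ^ 2 - ψ) * E) -
          ((k - a) / σ ^ 2 * (ψ + (a + k) / σ ^ 2) +
          (a + k) / σ ^ 2 * (ψ + (a - k) / σ ^ 2) * E)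
          = ((k - a) / σ ^ 2 + (a + k) / σ ^ 2) * ((k - a) / σ ^ 2 - ψ) * E := by ring
      nlinarith [mul_nonneg (mul_nonneg hβα.le (sub_nonneg.2 h)) hE0.le]
    · rw [max_eq_left h]
      have key : ψ * ((ψ + (a + k) / σ ^ 2) + ((k - a) / σ ^ 2 - ψ) * E) -
          ((k - a) / σ ^ 2 * (ψ + (a + k) / σ ^ 2) +
          (a + k) / σ ^ 2 * (ψ + (a - k) / σ ^ 2) * E)
          = (ψ - (k - a) / σ ^ 2) * (ψ + (a + k) / σ ^ 2) * (1 - E) := by ring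
      nlinarith [mul_nonneg (mul_nonneg (sub_nonneg.2 h) hA.le) (sub_nonneg.2 hE1)]

set_option maxHeartbeats 2000000 in
private lemma Phi_hasDerivAt {a b σ γ ψ T : ℝ} (ha : 0 < a) (hb : 0 < b) (hσ : 0 < σ)
    (hγ : 0 ≤ γ) (hψ : 0 ≤ ψ) {t : ℝ} (ht : t ≤ T) :
    HasDerivAt (fun s => Phi a b σ ψ γ T s)
      (σ ^ 2 / 2 * (Phi a b σ ψ γ T t) ^ 2 + a * (Phi a b σ ψ γ T t) - (1 + b * γ)) t := by
  have hka := kfun_gt ha hb hσ hγ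
  have hk2 := kfun_sq (a := a) (σ := σ) hb hγ
  have hσ2 : (0:ℝ) < σ ^ 2 := pow_pos hσ 2
  have hDpos := Phi_denom_pos (ψ := ψ) ha hb hσ hγ hψ ht
  set k := kfun a b σ γ with hkdef
  have hk : 0 < k := ha.trans hka
  have hD : (ψ + (a + k) / σ ^ 2) + ((k - a) / σ ^ 2 - ψ) * Real.exp (-k * (T - t)) ≠ 0 :=
    hDpos.ne'
  have hEder : HasDerivAt (fun s => Real.exp (-k * (T - s))) (k * Real.exp (-k * (T - t))) t := by
    have h1 : HasDerivAt (fun s : ℝ => -k * (T - s)) k t := by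
      have := ((hasDerivAt_const t T).sub (hasDerivAt_id t)).const_mul (-k)
      simpa using this
    simpa [mul_comm] using h1.exp
  have hnum : HasDerivAt (fun s => (k - a) / σ ^ 2 * (ψ + (a + k) / σ ^ 2) +
      (a + k) / σ ^ 2 * (ψ + (a - k) / σ ^ 2) * Real.exp (-k * (T - s)))
      ((a + k) / σ ^ 2 * (ψ + (a - k) / σ ^ 2) * (k * Real.exp (-k * (T - t)))) t :=
    (hEder.const_mul _).const_add _
  have hden : HasDerivAt (fun s => (ψ + (a + k) / σ ^ 2) +
      ((k - a) / σ ^ 2 - ψ) * Real.exp (-k * (T - s)))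
      (((k - a) / σ ^ 2 - ψ) * (k * Real.exp (-k * (T - t)))) t :=
    (hEder.const_mul _).const_add _
  have hdiv := hnum.div hden hD
  have hbγ : (1:ℝ) + b * γ = (k ^ 2 - a ^ 2) / (2 * σ ^ 2) := by
    field_simp
    linarith [hk2]
  simp only [Phi, ← hkdef]
  convert hdiv using 1
  case e'_4 => rfl
  case e'_5 => rfl
  case e'_8 => rfl
  rw [hbγ]
  set E := Real.exp (-k * (T - t)) with hEdef
  set N := (k - a) / σ ^ 2 * (ψ + (a + k) / σ ^ 2) +
      (a + k) / σ ^ 2 * (ψ + (a - k) / σ ^ 2) * E with hNdef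
  set D := ψ + (a + k) / σ ^ 2 + ((k - a) / σ ^ 2 - ψ) * E with hDdef
  have hD2 : D ^ 2 ≠ 0 := pow_ne_zero 2 hD
  rw [eq_div_iff hD2]
  have expand : (σ ^ 2 / 2 * (N / D) ^ 2 + a * (N / D) - (k ^ 2 - a ^ 2) / (2 * σ ^ 2)) * D ^ 2
      = σ ^ 2 / 2 * N ^ 2 + a * N * D - (k ^ 2 - a ^ 2) / (2 * σ ^ 2) * D ^ 2 := by
    field_simp
  rw [expand, hNdef, hDdef]
  field_simp
  ring

/-- Comparison principle for Riccati-type ODEs backwards from a terminal condition. -/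
private lemma riccati_compare {T a σ : ℝ} {p q f g : ℝ → ℝ}
    (hf : ∀ t ≤ T, HasDerivWithinAt f (σ ^ 2 / 2 * (f t) ^ 2 + a * f t - p t) (Set.Iic T) t)
    (hg : ∀ t ≤ T, HasDerivWithinAt g (σ ^ 2 / 2 * (g t) ^ 2 + a * g t - q t) (Set.Iic T) t)
    (hpq : ∀ t ≤ T, p t ≤ q t) (hT : f T ≤ g T) : ∀ t ≤ T, f t ≤ g t := by
  intro t₁ ht₁
  by_contra hlt
  push_neg at hlt
  have hfc : ContinuousOn f (Set.Icc t₁ T) := fun x hx =>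
    ((hf x hx.2).continuousWithinAt).mono Set.Icc_subset_Iic_self
  have hgc : ContinuousOn g (Set.Icc t₁ T) := fun x hx =>
    ((hg x hx.2).continuousWithinAt).mono Set.Icc_subset_Iic_self
  obtain ⟨Cf, hCf⟩ := (isCompact_Icc).exists_bound_of_continuousOn hfc
  obtain ⟨Cg, hCg⟩ := (isCompact_Icc).exists_bound_of_continuousOn hgc
  set K := σ ^ 2 / 2 * (Cf + Cg) + |a| with hKdef
  set d := fun t => g t - f t with hddef
  have hdc : ContinuousOn d (Set.Icc t₁ T) := hgc.sub hfc
  set Z := Set.Icc t₁ T ∩ d ⁻¹' (Set.Ici 0) with hZdef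
  have hZclosed : IsClosed Z := hdc.preimage_isClosed_of_isClosed isClosed_Icc isClosed_Ici
  have hTZ : T ∈ Z := ⟨⟨ht₁, le_rfl⟩, by simp only [Set.mem_preimage, Set.mem_Ici, hddef]; linarith⟩
  have hZne : Z.Nonempty := ⟨T, hTZ⟩
  have hbdd : BddBelow Z := ⟨t₁, fun x hx => hx.1.1⟩
  set τ := sInf Z with hτdef
  have hτZ : τ ∈ Z := hZclosed.csInf_mem hZne hbdd
  have hdτ : 0 ≤ d τ := hτZ.2
  have hdt₁ : d t₁ < 0 := by simp only [hddef]; linarith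
  have ht₁τ : t₁ < τ := by
    rcases lt_or_ge t₁ τ with h | h
    · exact h
    · exact absurd hτZ.2 (by simp only [le_antisymm h hτZ.1.1]; exact not_le.2 hdt₁)
  have hτT : τ ≤ T := hτZ.1.2
  have hneg : ∀ x ∈ Set.Ico t₁ τ, d x < 0 := by
    intro x hx
    by_contra hge
    push_neg at hge
    have hxZ : x ∈ Z := ⟨⟨hx.1, hx.2.le.trans hτT⟩, hge⟩
    exact absurd (csInf_le hbdd hxZ) (not_le.2 hx.2)
  -- e = d · exp(K·) is antitone on [t₁, τ]
  set e := fun t => d t * Real.exp (K * t) with hedef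
  set e' := fun x => ((σ ^ 2 / 2 * (g x) ^ 2 + a * g x - q x) -
      (σ ^ 2 / 2 * (f x) ^ 2 + a * f x - p x)) * Real.exp (K * x) +
      d x * (Real.exp (K * x) * K) with he'def
  have hec : ContinuousOn e (Set.Icc t₁ τ) :=
    (hdc.mono (Set.Icc_subset_Icc_right hτT)).mul
      ((Real.continuous_exp.comp (continuous_const.mul continuous_id)).continuousOn)
  have hee : AntitoneOn e (Set.Icc t₁ τ) := by
    apply antitoneOn_of_hasDerivWithinAt_nonpos (convex_Icc t₁ τ) hec (f' := e')
    · intro x hx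
      rw [interior_Icc] at hx
      have hxT : x < T := lt_of_lt_of_le hx.2 hτT
      have hfd : HasDerivAt f (σ ^ 2 / 2 * (f x) ^ 2 + a * f x - p x) x :=
        (hf x hxT.le).hasDerivAt (Iic_mem_nhds hxT)
      have hgd : HasDerivAt g (σ ^ 2 / 2 * (g x) ^ 2 + a * g x - q x) x :=
        (hg x hxT.le).hasDerivAt (Iic_mem_nhds hxT)
      have hexp : HasDerivAt (fun s => Real.exp (K * s)) (Real.exp (K * x) * K) x := by
        have h1 : HasDerivAt (fun s : ℝ => K * s) K x := by
          simpa using (hasDerivAt_id x).const_mul K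
        simpa using h1.exp
      exact (((hgd.sub hfd).mul hexp)).hasDerivWithinAt
    · intro x hx
      rw [interior_Icc] at hx
      have hxIcc : x ∈ Set.Icc t₁ T := ⟨hx.1.le, (hx.2.le.trans hτT)⟩
      have hdx : d x < 0 := hneg x ⟨hx.1.le, hx.2⟩
      have hfb : |f x| ≤ Cf := by simpa [Real.norm_eq_abs] using hCf x hxIcc
      have hgb : |g x| ≤ Cg := by simpa [Real.norm_eq_abs] using hCg x hxIcc
      have hcoef : 0 ≤ σ ^ 2 / 2 * (f x + g x) + a + K := by
        have h1 : -Cf ≤ f x := neg_le_of_abs_le hfb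
        have h2 : -Cg ≤ g x := neg_le_of_abs_le hgb
        have h3 : -|a| ≤ a := neg_abs_le a
        nlinarith [sq_nonneg σ]
      have hsum : (σ ^ 2 / 2 * (f x + g x) + a + K) * d x ≤ 0 :=
        mul_nonpos_of_nonneg_of_nonpos hcoef hdx.le
      have hqp : p x ≤ q x := hpq x (lt_of_lt_of_le hx.2 hτT).le
      have hE : 0 < Real.exp (K * x) := Real.exp_pos _
      have hkey : ((σ ^ 2 / 2 * (g x) ^ 2 + a * g x - q x) -
          (σ ^ 2 / 2 * (f x) ^ 2 + a * f x - p x)) + d x * K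
          = (σ ^ 2 / 2 * (f x + g x) + a + K) * d x - (q x - p x) := by
        simp only [hddef]; ring
      have hnp : ((σ ^ 2 / 2 * (g x) ^ 2 + a * g x - q x) -
          (σ ^ 2 / 2 * (f x) ^ 2 + a * f x - p x)) + d x * K ≤ 0 := by
        rw [hkey]; linarith
      have : e' x = (((σ ^ 2 / 2 * (g x) ^ 2 + a * g x - q x) -
          (σ ^ 2 / 2 * (f x) ^ 2 + a * f x - p x)) + d x * K) * Real.exp (K * x) := by
        simp only [he'def]; ring
      rw [this]
      exact mul_nonpos_of_nonpos_of_nonneg hnp hE.le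
  have h1 : e τ ≤ e t₁ := hee ⟨le_rfl, ht₁τ.le⟩ ⟨ht₁τ.le, le_rfl⟩ ht₁τ.le
  have h2 : 0 ≤ e τ := mul_nonneg hdτ (Real.exp_pos _).le
  have h3 : e t₁ < 0 := mul_neg_of_neg_of_pos hdt₁ (Real.exp_pos _)
  linarith

end Aux

/-- sandwich comparison for Riccati solutions: with
0 ≤ g̲ ≤ g₁(t) ≤ g₂(t) ≤ ḡ and 0 ≤ ψ̲ ≤ ψ₁ ≤ ψ₂ ≤ ψ̄, the solutions φ₁, φ₂ of the
corresponding Riccati equations and the extremal explicit solutions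
φ̲ = Φ(·,T;ψ̲,g̲), φ̄ = Φ(·,T;ψ̄,ḡ) satisfy, for all t ≤ T,
min(ψ̲,(k(g̲)−a)/σ²) ≤ φ̲(t) ≤ φ₁(t) ≤ φ₂(t) ≤ φ̄(t) ≤ max(ψ̄,(k(ḡ)−a)/σ²). -/
theorem riccati_sandwich
    (T a b σ : ℝ) (ha : 0 < a) (hb : 0 < b) (hσ : 0 < σ)
    (glow ghigh : ℝ) (g₁ g₂ : ℝ → ℝ)
    (hg₁_cont : ContinuousOn g₁ (Set.Iic T)) (hg₂_cont : ContinuousOn g₂ (Set.Iic T))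
    (hglow : 0 ≤ glow)
    (hg_bounds : ∀ t ≤ T, glow ≤ g₁ t ∧ g₁ t ≤ g₂ t ∧ g₂ t ≤ ghigh)
    (ψlow ψ₁ ψ₂ ψhigh : ℝ)
    (hψlow : 0 ≤ ψlow) (hψ₁ : ψlow ≤ ψ₁) (hψ₂ : ψ₁ ≤ ψ₂) (hψhigh : ψ₂ ≤ ψhigh)
    (φ₁ φ₂ : ℝ → ℝ)
    (hφ₁T : φ₁ T = ψ₁) (hφ₂T : φ₂ T = ψ₂)
    (hφ₁ : ∀ t ≤ T, HasDerivWithinAt φ₁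
      (σ ^ 2 / 2 * (φ₁ t) ^ 2 + a * φ₁ t - (1 + b * g₁ t)) (Set.Iic T) t)
    (hφ₂ : ∀ t ≤ T, HasDerivWithinAt φ₂
      (σ ^ 2 / 2 * (φ₂ t) ^ 2 + a * φ₂ t - (1 + b * g₂ t)) (Set.Iic T) t) :
    ∀ t ≤ T,
      min ψlow ((kfun a b σ glow - a) / σ ^ 2) ≤ Phi a b σ ψlow glow T t ∧
      Phi a b σ ψlow glow T t ≤ φ₁ t ∧
      φ₁ t ≤ φ₂ t ∧
      φ₂ t ≤ Phi a b σ ψhigh ghigh T t ∧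
      Phi a b σ ψhigh ghigh T t ≤ max ψhigh ((kfun a b σ ghigh - a) / σ ^ 2) := by
  have hghigh : 0 ≤ ghigh := by
    obtain ⟨h1, h2, h3⟩ := hg_bounds T le_rfl
    linarith
  have hψhigh0 : 0 ≤ ψhigh := by linarith
  have hPhiLow : ∀ t ≤ T, HasDerivWithinAt (fun s => Phi a b σ ψlow glow T s)
      (σ ^ 2 / 2 * (Phi a b σ ψlow glow T t) ^ 2 + a * (Phi a b σ ψlow glow T t)
        - (1 + b * glow)) (Set.Iic T) t :=
    fun t ht => (Phi_hasDerivAt ha hb hσ hglow hψlow ht).hasDerivWithinAt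
  have hPhiHigh : ∀ t ≤ T, HasDerivWithinAt (fun s => Phi a b σ ψhigh ghigh T s)
      (σ ^ 2 / 2 * (Phi a b σ ψhigh ghigh T t) ^ 2 + a * (Phi a b σ ψhigh ghigh T t)
        - (1 + b * ghigh)) (Set.Iic T) t :=
    fun t ht => (Phi_hasDerivAt ha hb hσ hghigh hψhigh0 ht).hasDerivWithinAt
  have hlow₁ : ∀ t ≤ T, Phi a b σ ψlow glow T t ≤ φ₁ t := by
    apply riccati_compare (p := fun _ => 1 + b * glow) (q := fun s => 1 + b * g₁ s)
      hPhiLow hφ₁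
    · intro t ht
      have := (hg_bounds t ht).1
      nlinarith
    · rw [Phi_apply_T ha hb hσ hglow, hφ₁T]; exact hψ₁
  have h₁₂ : ∀ t ≤ T, φ₁ t ≤ φ₂ t := by
    apply riccati_compare (p := fun s => 1 + b * g₁ s) (q := fun s => 1 + b * g₂ s) hφ₁ hφ₂
    · intro t ht
      have := (hg_bounds t ht).2.1
      nlinarith
    · rw [hφ₁T, hφ₂T]; exact hψ₂
  have h₂high : ∀ t ≤ T, φ₂ t ≤ Phi a b σ ψhigh ghigh T t := by
    apply riccati_compare (p := fun s => 1 + b * g₂ s) (q := fun _ => 1 + b * ghigh)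
      hφ₂ hPhiHigh
    · intro t ht
      have := (hg_bounds t ht).2.2
      nlinarith
    · rw [Phi_apply_T ha hb hσ hghigh, hφ₂T]; exact hψhigh
  intro t ht
  refine ⟨(Phi_bounds ha hb hσ hglow hψlow ht).1, hlow₁ t ht, h₁₂ t ht, h₂high t ht,
    (Phi_bounds ha hb hσ hghigh hψhigh0 ht).2⟩
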